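/- The function F : ℝ² → ℝ defined by F(x,y) = (x² + y²)^{α/2} · x, for a real exponent α > 0 with α ∉ 2ℕ, is not real analytic at the origin; i.e., there is no power series ∑ a_{mn} x^m y^n converging absolutely in some neighborhood of (0,0) whose sum equals F there. -/

import Mathlib

open Real

private lemma abs_le_zero_aux {a C r : ℝ} (hC : 0 ≤ C) (hr : 0 < r)
    (h : ∀ x : ℝ, 0 < x → x ≤ r → a ≤ C * x) : a ≤ 0 := by
  by_contra hpos
  push_neg at hpos
  set x := min r (a / (2 * (C + 1))) with hx
  have hd : 0 < a / (2 * (C + 1)) := by positivity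
  have hx0 : 0 < x := lt_min hr hd
  have hxr : x ≤ r := min_le_left _ _
  have h1 := h x hx0 hxr
  have h2 : C * x ≤ C * (a / (2 * (C + 1))) :=
    mul_le_mul_of_nonneg_left (min_le_right _ _) hC
  have h3 : a / (2 * (C + 1)) * (2 * (C + 1)) = a :=
    div_mul_cancel₀ _ (by positivity)
  nlinarith [hd]

private lemma tail_bound (c : ℕ → ℝ) (r : ℝ) (hr : 0 < r)
    (hs : Summable fun m => |c m| * r ^ m)
    (m0 : ℕ) (hz : ∀ j, j < m0 → c j = 0) :
    ∃ C : ℝ, 0 ≤ C ∧ ∀ x : ℝ, 0 < x → x ≤ r →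
      |(∑' m, c m * x ^ m) - c m0 * x ^ m0| ≤ C * x ^ (m0 + 1) := by
  have h1 : Summable fun j => |c (j + (m0 + 1))| * r ^ (j + (m0 + 1)) :=
    (summable_nat_add_iff (f := fun m => |c m| * r ^ m) (m0 + 1)).2 hs
  have hsr : Summable fun j => |c (j + (m0 + 1))| * r ^ j := by
    have h2 := h1.mul_right ((r ^ (m0 + 1))⁻¹)
    refine h2.congr fun j => ?_
    rw [pow_add]
    field_simp
  refine ⟨∑' j, |c (j + (m0 + 1))| * r ^ j, tsum_nonneg (fun j => by positivity), ?_⟩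
  intro x hx hxr
  have hxa : Summable fun m => |c m| * x ^ m :=
    hs.of_nonneg_of_le (fun m => by positivity)
      (fun m => mul_le_mul_of_nonneg_left (pow_le_pow_left₀ hx.le hxr m) (abs_nonneg _))
  have hxs : Summable fun m => c m * x ^ m := by
    apply Summable.of_norm
    refine hxa.congr fun m => ?_
    rw [Real.norm_eq_abs, abs_mul, abs_pow, abs_of_pos hx]
  have hsplit := Summable.sum_add_tsum_nat_add (f := fun m => c m * x ^ m) (m0 + 1) hxs
  have hfin : ∑ m ∈ Finset.range (m0 + 1), c m * x ^ m = c m0 * x ^ m0 := by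
    rw [Finset.sum_range_succ, Finset.sum_eq_zero, zero_add]
    intro j hj
    rw [hz j (Finset.mem_range.mp hj), zero_mul]
  have htail : (∑' m, c m * x ^ m) - c m0 * x ^ m0
      = ∑' j, c (j + (m0 + 1)) * x ^ (j + (m0 + 1)) := by
    rw [← hsplit, hfin]; ring
  rw [htail]
  have hA : Summable fun j => ‖c (j + (m0 + 1)) * x ^ (j + (m0 + 1))‖ := by
    have h1 : Summable fun j => |c (j + (m0 + 1))| * x ^ (j + (m0 + 1)) :=
      (summable_nat_add_iff (f := fun m => |c m| * x ^ m) (m0 + 1)).2 hxa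
    refine h1.congr fun j => ?_
    rw [Real.norm_eq_abs, abs_mul, abs_pow, abs_of_pos hx]
  have hB : Summable fun j => |c (j + (m0 + 1))| * r ^ j * x ^ (m0 + 1) := hsr.mul_right _
  calc |∑' j, c (j + (m0 + 1)) * x ^ (j + (m0 + 1))|
      ≤ ∑' j, ‖c (j + (m0 + 1)) * x ^ (j + (m0 + 1))‖ := by
        simpa [Real.norm_eq_abs] using norm_tsum_le_tsum_norm hA
    _ ≤ ∑' j, |c (j + (m0 + 1))| * r ^ j * x ^ (m0 + 1) := by
        refine Summable.tsum_le_tsum (fun j => ?_) (by simpa [Real.norm_eq_abs] using hA) hB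
        rw [Real.norm_eq_abs, abs_mul, abs_pow, abs_of_pos hx, pow_add]
        have hxj : x ^ j ≤ r ^ j := pow_le_pow_left₀ hx.le hxr j
        have h6 : |c (j + (m0 + 1))| * x ^ j ≤ |c (j + (m0 + 1))| * r ^ j :=
          mul_le_mul_of_nonneg_left hxj (abs_nonneg _)
        nlinarith [pow_nonneg hx.le (m0 + 1), abs_nonneg (c (j + (m0 + 1))), pow_nonneg hx.le j]
    _ = (∑' j, |c (j + (m0 + 1))| * r ^ j) * x ^ (m0 + 1) := tsum_mul_right

private lemma coeffs_zero (c : ℕ → ℝ) (r : ℝ) (hr : 0 < r)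
    (hs : Summable fun m => |c m| * r ^ m)
    (hf : ∀ x : ℝ, 0 < x → x ≤ r → (∑' m, c m * x ^ m) = 0) :
    ∀ m, c m = 0 := by
  intro m
  induction m using Nat.strong_induction_on with
  | _ m ih =>
  obtain ⟨C, hC, hB⟩ := tail_bound c r hr hs m ih
  have h1 : ∀ x : ℝ, 0 < x → x ≤ r → |c m| ≤ C * x := by
    intro x hx hxr
    have h := hB x hx hxr
    rw [hf x hx hxr, zero_sub, abs_neg, abs_mul, abs_pow, abs_of_pos hx, pow_succ] at h
    have hxm : (0:ℝ) < x ^ m := pow_pos hx m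
    refine le_of_mul_le_mul_right ?_ hxm
    nlinarith [h]
  have h2 : |c m| ≤ 0 := abs_le_zero_aux hC hr h1
  exact abs_nonpos_iff.mp h2

/-- For `α > 0` with `α ∉ 2ℕ`, the function `F(x,y) = (x²+y²)^{α/2}·x` is not real analytic
at the origin: it agrees with no absolutely convergent double power series near `(0,0)`. -/
theorem powerNonlinearity_not_realAnalytic (α : ℝ) (hα : 0 < α)
    (hαn : ∀ k : ℕ, α ≠ 2 * k) :
    ¬ ∃ (a : ℕ × ℕ → ℝ) (δ : ℝ), 0 < δ ∧
      ∀ x y : ℝ, |x| < δ → |y| < δ →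
        Summable (fun p : ℕ × ℕ => |a p| * |x| ^ p.1 * |y| ^ p.2) ∧
          (x ^ 2 + y ^ 2) ^ (α / 2) * x = ∑' p : ℕ × ℕ, a p * x ^ p.1 * y ^ p.2 := by
  rintro ⟨a, δ, hδ, H⟩
  set c : ℕ → ℝ := fun m => a (m, 0) with hc
  have step1 : ∀ x : ℝ, |x| < δ →
      Summable (fun m => |c m| * |x| ^ m) ∧ |x| ^ α * x = ∑' m, c m * x ^ m := by
    intro x hx
    obtain ⟨hS, hEq⟩ := H x 0 hx (by simpa using hδ)
    have hinj : Function.Injective (fun m : ℕ => ((m, 0) : ℕ × ℕ)) := by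
      intro m n h
      simpa using congrArg Prod.fst h
    constructor
    · have h1 := hS.comp_injective hinj
      refine h1.congr fun m => ?_
      simp [hc]
    · have hsum : Summable fun p : ℕ × ℕ => a p * x ^ p.1 * (0:ℝ) ^ p.2 := by
        apply Summable.of_norm
        refine hS.congr fun p => ?_
        rw [Real.norm_eq_abs, abs_mul, abs_mul, abs_pow, abs_pow]
      have ht : (∑' p : ℕ × ℕ, a p * x ^ p.1 * (0:ℝ) ^ p.2) = ∑' m, c m * x ^ m := by
        rw [Summable.tsum_prod hsum]
        refine tsum_congr fun m => ?_
        rw [tsum_eq_single 0 (by intro n hn; simp [zero_pow hn])]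
        simp [hc]
      have hL : (x ^ 2 + (0:ℝ) ^ 2) ^ (α / 2) = |x| ^ α := by
        have h0 : x ^ 2 + (0:ℝ) ^ 2 = |x| ^ (2:ℕ) := by rw [sq_abs]; ring
        rw [h0, ← Real.rpow_natCast |x| 2, ← Real.rpow_mul (abs_nonneg x)]
        congr 1
        push_cast
        ring
      rw [← hL]
      exact hEq.trans ht
  set r := δ / 2 with hrdef
  have hr : 0 < r := by positivity
  have hrδ : r < δ := by rw [hrdef]; linarith
  have hs : Summable fun m => |c m| * r ^ m := by
    have := (step1 r (by rw [abs_of_pos hr]; exact hrδ)).1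
    simpa [abs_of_pos hr] using this
  have hposEq : ∀ x : ℝ, 0 < x → x ≤ r → (∑' m, c m * x ^ m) = x ^ (α + 1) := by
    intro x hx hxr
    have h := (step1 x (by rw [abs_of_pos hx]; linarith)).2
    rw [abs_of_pos hx] at h
    rw [← h, Real.rpow_add_one hx.ne' α]
  -- parity: even coefficients vanish
  set b : ℕ → ℝ := fun m => (1 + (-1:ℝ) ^ m) * c m with hbdef
  have hbabs : ∀ m, |b m| ≤ 2 * |c m| := by
    intro m
    rw [hbdef]
    simp only
    rw [abs_mul]
    have h1 : |1 + (-1:ℝ) ^ m| ≤ 2 := by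
      rcases Nat.even_or_odd m with he | ho
      · rw [he.neg_one_pow]; norm_num
      · rw [ho.neg_one_pow]; norm_num
    nlinarith [abs_nonneg (c m)]
  have hbs : Summable fun m => |b m| * r ^ m := by
    refine Summable.of_nonneg_of_le (fun m => by positivity) (fun m => ?_) (hs.mul_left 2)
    have := hbabs m
    nlinarith [pow_nonneg hr.le m, abs_nonneg (c m)]
  have hbzero_sum : ∀ x : ℝ, 0 < x → x ≤ r → (∑' m, b m * x ^ m) = 0 := by
    intro x hx hxr
    have hx1 : |x| < δ := by rw [abs_of_pos hx]; linarith
    have hx2 : |(-x)| < δ := by rw [abs_neg]; exact hx1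
    have h1 := (step1 x hx1).2
    have h2 := (step1 (-x) hx2).2
    have s1 : Summable fun m => c m * x ^ m := by
      apply Summable.of_norm
      refine (step1 x hx1).1.congr fun m => ?_
      rw [Real.norm_eq_abs, abs_mul, abs_pow]
    have s2 : Summable fun m => c m * (-x) ^ m := by
      apply Summable.of_norm
      refine (step1 (-x) hx2).1.congr fun m => ?_
      rw [Real.norm_eq_abs, abs_mul, abs_pow]
    have hterm : ∀ m, b m * x ^ m = c m * x ^ m + c m * (-x) ^ m := by
      intro m
      rw [hbdef]
      simp only
      rw [neg_pow]
      ring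
    rw [tsum_congr hterm, Summable.tsum_add s1 s2, ← h1, ← h2, abs_neg, abs_of_pos hx]
    ring
  have hbz := coeffs_zero b r hr hbs hbzero_sum
  have heven : ∀ m, Even m → c m = 0 := by
    intro m hm
    have := hbz m
    rw [hbdef] at this
    simp only at this
    rw [hm.neg_one_pow] at this
    linarith
  -- all coefficients with index ≤ α + 1 vanish
  have hvanish : ∀ m : ℕ, (m : ℝ) ≤ α + 1 → c m = 0 := by
    intro m
    induction m using Nat.strong_induction_on with
    | _ m ih =>
    intro hm
    have hz : ∀ j, j < m → c j = 0 := fun j hj =>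
      ih j hj (((Nat.cast_lt (α := ℝ)).mpr hj).le.trans hm)
    rcases eq_or_lt_of_le hm with heq | hlt
    · rcases Nat.even_or_odd m with he | ho
      · exact heven m he
      · exfalso
        obtain ⟨k, hk⟩ := ho
        refine hαn k ?_
        have : ((2 * k + 1 : ℕ) : ℝ) = α + 1 := by rw [← hk]; exact_mod_cast heq
        push_cast at this
        linarith
    · obtain ⟨C, hC, hB⟩ := tail_bound c r hr hs m hz
      set β := α + 1 - m with hβ
      have hβ0 : 0 < β := by rw [hβ]; linarith
      have hbound : ∀ x : ℝ, 0 < x → x ≤ r → |c m| ≤ x ^ β + C * x := by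
        intro x hx hxr
        have h1 := hB x hx hxr
        rw [hposEq x hx hxr] at h1
        have h2 : x ^ (α + 1) = x ^ β * x ^ (m : ℕ) := by
          rw [← Real.rpow_natCast x m, ← Real.rpow_add hx]
          congr 1
          rw [hβ]; ring
        rw [h2] at h1
        have h3 : x ^ β * x ^ (m : ℕ) - c m * x ^ m = (x ^ β - c m) * x ^ m := by ring
        rw [h3, abs_mul, abs_pow, abs_of_pos hx, pow_succ] at h1
        have h4 : |x ^ β - c m| ≤ C * x :=
          le_of_mul_le_mul_right (by nlinarith [h1]) (pow_pos hx m)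
        have h5 : |c m| ≤ |x ^ β - c m| + |x ^ β| := by
          have := abs_sub (x ^ β - c m) (x ^ β)
          simpa using this
        have h6 : |x ^ β| = x ^ β := abs_of_nonneg (Real.rpow_nonneg hx.le β)
        linarith
      have hT : Filter.Tendsto (fun x : ℝ => x ^ β + C * x) (nhdsWithin 0 (Set.Ioi 0))
          (nhds 0) := by
        have t1 : Filter.Tendsto (fun x : ℝ => x ^ β) (nhds 0) (nhds 0) := by
          have h := Real.continuousAt_rpow_const 0 β (Or.inr hβ0.le)
          have h0 : (0:ℝ) ^ β = 0 := Real.zero_rpow hβ0.ne'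
          simpa [ContinuousAt, h0] using h
        have t2 : Filter.Tendsto (fun x : ℝ => C * x) (nhds (0:ℝ)) (nhds 0) := by
          simpa using (Filter.tendsto_id (x := nhds (0:ℝ))).const_mul C
        have := t1.add t2
        simpa using this.mono_left nhdsWithin_le_nhds
      have hle : |c m| ≤ 0 := by
        refine ge_of_tendsto hT ?_
        filter_upwards [Ioc_mem_nhdsGT hr] with x hx
        exact hbound x hx.1 hx.2
      exact abs_nonpos_iff.mp hle
  -- final contradiction
  set M := ⌊α⌋₊ + 2 with hM
  have hMgt : α + 1 < (M : ℝ) := by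
    have := Nat.lt_floor_add_one α
    rw [hM]
    push_cast
    linarith
  have hzM : ∀ j, j < M → c j = 0 := by
    intro j hj
    apply hvanish
    have hj' : j ≤ ⌊α⌋₊ + 1 := by omega
    have h1 : (j:ℝ) ≤ (⌊α⌋₊:ℝ) + 1 := by exact_mod_cast hj'
    have hfl : (⌊α⌋₊:ℝ) ≤ α := Nat.floor_le hα.le
    linarith
  obtain ⟨C, hC, hB⟩ := tail_bound c r hr hs M hzM
  set β := (M : ℝ) - (α + 1) with hβ
  have hβ0 : 0 < β := by rw [hβ]; linarith
  set D := |c M| + C * r with hD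
  have hD0 : 0 ≤ D := by positivity
  have hone : ∀ x : ℝ, 0 < x → x ≤ r → 1 ≤ D * x ^ β := by
    intro x hx hxr
    have h1 := hB x hx hxr
    rw [hposEq x hx hxr] at h1
    have h2 := (abs_le.mp h1).2
    have hxM : (0:ℝ) < x ^ M := pow_pos hx M
    have h3 : x ^ (α + 1) ≤ D * x ^ M := by
      have hcM : c M ≤ |c M| := le_abs_self _
      have hps : x ^ (M + 1) = x ^ M * x := pow_succ x M
      rw [hD]
      nlinarith [mul_nonneg (mul_nonneg hC (sub_nonneg.2 hxr)) hxM.le,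
        mul_nonneg (sub_nonneg.2 hcM) hxM.le]
    have hxMr : (x:ℝ) ^ M = x ^ (α + 1) * x ^ β := by
      rw [← Real.rpow_natCast x M, ← Real.rpow_add hx]
      congr 1
      rw [hβ]; ring
    have hp : (0:ℝ) < x ^ (α + 1) := Real.rpow_pos_of_pos hx _
    refine le_of_mul_le_mul_right ?_ hp
    rw [hxMr] at h3
    nlinarith [h3]
  have hT : Filter.Tendsto (fun x : ℝ => D * x ^ β) (nhdsWithin 0 (Set.Ioi 0)) (nhds 0) := by
    have t1 : Filter.Tendsto (fun x : ℝ => x ^ β) (nhds 0) (nhds 0) := by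
      have h := Real.continuousAt_rpow_const 0 β (Or.inr hβ0.le)
      have h0 : (0:ℝ) ^ β = 0 := Real.zero_rpow hβ0.ne'
      simpa [ContinuousAt, h0] using h
    have := t1.const_mul D
    simpa using this.mono_left nhdsWithin_le_nhds
  have habs : (1:ℝ) ≤ 0 := by
    refine ge_of_tendsto hT ?_
    filter_upwards [Ioc_mem_nhdsGT hr] with x hx
    exact hone x hx.1 hx.2
  linarith
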